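/- In a simple WNM-algebra with more than two elements, ¬x = ¬y for all x, y with 0 < x, y < 1; in particular the algebra has a coatom, namely u = ¬x for any 0 < x < 1. -/

import Mathlib

class ResLat (A : Type*) extends Lattice A, CommMonoid A where
  rbot : A
  himp : A → A → A
  rbot_le : ∀ a : A, rbot ≤ a
  le_one : ∀ a : A, a ≤ 1
  resid : ∀ a b c : A, a * b ≤ c ↔ a ≤ himp b c

namespace ResLat

variable {A : Type*} [ResLat A]

def rneg (a : A) : A := himp a rbot

def Nilpotent (a : A) : Prop := ∃ n : ℕ, 1 ≤ n ∧ a ^ n = rbot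

def Unity (a : A) : Prop := ∀ n : ℕ, 1 ≤ n → Nilpotent (rneg (a ^ n))

def ImpFilter (F : Set A) : Prop :=
  (1 : A) ∈ F ∧ ∀ x y : A, x ∈ F → himp x y ∈ F → y ∈ F

def MaxImpFilter (F : Set A) : Prop :=
  ImpFilter F ∧ F ≠ Set.univ ∧
    ∀ G : Set A, ImpFilter G → F ⊆ G → G = F ∨ G = Set.univ

def Rad (A : Type*) [ResLat A] : Set A :=
  { x | ∀ F : Set A, MaxImpFilter F → x ∈ F }

def Ds (A : Type*) [ResLat A] : Set A := { x | rneg x = rbot }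

def Simple (A : Type*) [ResLat A] : Prop :=
  Nontrivial A ∧ ∀ F : Set A, ImpFilter F → F = {1} ∨ F = Set.univ

def IsHom {B : Type*} [ResLat B] (f : A → B) : Prop :=
  (∀ x y : A, f (x * y) = f x * f y) ∧
  (∀ x y : A, f (himp x y) = himp (f x) (f y)) ∧
  (∀ x y : A, f (x ⊓ y) = f x ⊓ f y) ∧
  (∀ x y : A, f (x ⊔ y) = f x ⊔ f y) ∧
  f rbot = rbot ∧ f 1 = 1

end ResLat

open ResLat

namespace ResLatAux

open ResLat

variable {A : Type*} [ResLat A]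

lemma le_himp_iff' {a b c : A} : a * b ≤ c ↔ a ≤ himp b c := resid a b c

lemma mul_le_mul_left' {a b : A} (h : a ≤ b) (c : A) : a * c ≤ b * c :=
  le_himp_iff'.mpr (le_trans h (le_himp_iff'.mp (le_refl (b * c))))

lemma mul_le_mul_right' {a b : A} (h : a ≤ b) (c : A) : c * a ≤ c * b := by
  rw [mul_comm c a, mul_comm c b]; exact mul_le_mul_left' h c

lemma mul_le_right' (a b : A) : a * b ≤ b := by
  have := mul_le_mul_left' (ResLat.le_one a) b
  rwa [one_mul] at this

lemma mul_le_left'' (a b : A) : a * b ≤ a := by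
  rw [mul_comm]; exact mul_le_right' b a

lemma mul_himp_le' (a b : A) : himp a b * a ≤ b := le_himp_iff'.mpr le_rfl

lemma himp_eq_one' {a b : A} (h : a ≤ b) : himp a b = 1 :=
  le_antisymm (ResLat.le_one _) (le_himp_iff'.mp (by rwa [one_mul]))

lemma le_of_himp_eq_one' {a b : A} (h : himp a b = 1) : a ≤ b := by
  have := le_himp_iff'.mpr (le_of_eq h.symm)
  rwa [one_mul] at this

lemma bot_mul' (a : A) : (rbot : A) * a = rbot :=
  le_antisymm (le_himp_iff'.mpr (rbot_le _)) (rbot_le _)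

lemma mul_sup' (a b c : A) : a * (b ⊔ c) = a * b ⊔ a * c := by
  apply le_antisymm
  · rw [mul_comm]
    have h1 : b * a ≤ a * b ⊔ a * c := by rw [mul_comm]; exact le_sup_left
    have h2 : c * a ≤ a * b ⊔ a * c := by rw [mul_comm]; exact le_sup_right
    exact le_himp_iff'.mpr (sup_le (le_himp_iff'.mp h1) (le_himp_iff'.mp h2))
  · exact sup_le (mul_le_mul_right' le_sup_left a) (mul_le_mul_right' le_sup_right a)

lemma exists_pow_eq_bot' (hs : Simple A) {a : A} (h : a ≠ 1) :
    ∃ n : ℕ, a ^ n = rbot := by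
  have hF : ImpFilter {y : A | ∃ n : ℕ, a ^ n ≤ y} := by
    constructor
    · exact ⟨0, by simp⟩
    · rintro x y ⟨n, hn⟩ ⟨m, hm⟩
      refine ⟨n + m, ?_⟩
      calc a ^ (n + m) = a ^ n * a ^ m := pow_add a n m
        _ ≤ x * a ^ m := mul_le_mul_left' hn _
        _ ≤ x * himp x y := mul_le_mul_right' hm x
        _ ≤ y := by rw [mul_comm]; exact mul_himp_le' x y
  rcases hs.2 _ hF with hone | huniv
  · exfalso
    have : a ∈ {y : A | ∃ n : ℕ, a ^ n ≤ y} := ⟨1, by simp⟩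
    rw [hone] at this
    exact h this
  · have : (rbot : A) ∈ {y : A | ∃ n : ℕ, a ^ n ≤ y} := by
      rw [huniv]; trivial
    obtain ⟨n, hn⟩ := this
    exact ⟨n, le_antisymm hn (rbot_le _)⟩

lemma sup_pow_eq_one' {a b : A} (h : a ⊔ b = 1) : ∀ n : ℕ, a ⊔ b ^ n = 1
  | 0 => by
      rw [pow_zero]
      exact le_antisymm (ResLat.le_one _) le_sup_right
  | n + 1 => by
      have ih := sup_pow_eq_one' h n
      have key : (a ⊔ b) * (a ⊔ b ^ n) ≤ a ⊔ b ^ (n + 1) := by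
        rw [mul_sup', mul_comm _ a, mul_comm _ (b ^ n), mul_sup', mul_sup']
        refine sup_le (sup_le ?_ ?_) (sup_le ?_ ?_)
        · exact le_trans (mul_le_left'' a a) le_sup_left
        · exact le_trans (mul_le_left'' a b) le_sup_left
        · exact le_trans (mul_le_right' (b ^ n) a) le_sup_left
        · rw [← pow_succ]; exact le_sup_right
      have : (1 : A) ≤ a ⊔ b ^ (n + 1) := by
        calc (1 : A) = (a ⊔ b) * (a ⊔ b ^ n) := by rw [h, ih, one_mul]
          _ ≤ a ⊔ b ^ (n + 1) := key
      exact le_antisymm (ResLat.le_one _) this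

lemma eq_one_of_sup' (hs : Simple A) {a b : A} (h : a ⊔ b = 1) (hb : b ≠ 1) :
    a = 1 := by
  obtain ⟨n, hn⟩ := exists_pow_eq_bot' hs hb
  have h2 := sup_pow_eq_one' h n
  rwa [hn, sup_eq_left.mpr (rbot_le a)] at h2

lemma total' (hpl : ∀ x y : A, himp x y ⊔ himp y x = 1) (hs : Simple A)
    (x y : A) : x ≤ y ∨ y ≤ x := by
  by_cases h : himp y x = 1
  · right; exact le_of_himp_eq_one' h
  · left; exact le_of_himp_eq_one' (eq_one_of_sup' hs (hpl x y) h)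

lemma sq_bot' (hs : Simple A)
    (hwnm : ∀ x y : A, rneg (x * y) ⊔ himp (x ⊓ y) (x * y) = 1)
    {x : A} (hx0 : rbot < x) (hx1 : x < 1) : x * x = rbot := by
  have h := hwnm x x
  rw [inf_idem] at h
  by_cases hc : himp x (x * x) = 1
  · exfalso
    have hxx : x * x = x := le_antisymm (mul_le_left'' x x) (le_of_himp_eq_one' hc)
    obtain ⟨n, hn⟩ := exists_pow_eq_bot' hs hx1.ne
    have hp : ∀ m : ℕ, x ^ (m + 1) = x := by
      intro m
      induction m with
      | zero => simp
      | succ k ih => rw [pow_succ, ih, hxx]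
    cases n with
    | zero =>
        rw [pow_zero] at hn
        have hxb : x < rbot := by rwa [hn] at hx1
        exact absurd (lt_of_lt_of_le hxb (rbot_le x)) (lt_irrefl x)
    | succ m =>
        rw [hp m] at hn
        exact hx0.ne' hn
  · have h1 : rneg (x * x) = 1 := eq_one_of_sup' hs h hc
    simp only [rneg] at h1
    exact le_antisymm (le_of_himp_eq_one' h1) (rbot_le _)

lemma le_rneg' (hpl : ∀ x y : A, himp x y ⊔ himp y x = 1)
    (hwnm : ∀ x y : A, rneg (x * y) ⊔ himp (x ⊓ y) (x * y) = 1)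
    (hs : Simple A) {x : A} (hx0 : rbot < x) (hx1 : x < 1)
    {z : A} (hz : z < 1) : z ≤ rneg x := by
  have hzx : z * x ≤ rbot := by
    rcases total' hpl hs z x with hzl | hxl
    · calc z * x ≤ x * x := mul_le_mul_left' hzl x
        _ = rbot := sq_bot' hs hwnm hx0 hx1
    · rcases eq_or_lt_of_le (rbot_le z) with hz0 | hz0
      · rw [← hz0, bot_mul']
      · calc z * x ≤ z * z := mul_le_mul_right' hxl z
          _ = rbot := sq_bot' hs hwnm hz0 hz
  simp only [rneg]
  exact le_himp_iff'.mp hzx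

lemma rneg_lt_one' {x : A} (hx0 : rbot < x) : rneg x < 1 := by
  refine lt_of_le_of_ne (ResLat.le_one _) (fun h => ?_)
  simp only [rneg] at h
  exact hx0.ne' (le_antisymm (le_of_himp_eq_one' h) (rbot_le x))

end ResLatAux

open ResLatAux

theorem stmt16 {A : Type*} [ResLat A]
    (hpl : ∀ x y : A, himp x y ⊔ himp y x = 1)
    (hwnm : ∀ x y : A, rneg (x * y) ⊔ himp (x ⊓ y) (x * y) = 1)
    (hsimple : Simple A)
    (hcard : ∃ a b c : A, a ≠ b ∧ a ≠ c ∧ b ≠ c) :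
    (∀ x y : A, rbot < x → x < 1 → rbot < y → y < 1 → rneg x = rneg y) ∧
    (∀ x : A, rbot < x → x < 1 →
      (rneg x < 1 ∧ ∀ z : A, rneg x < z → z = 1)) := by
  constructor
  · intro x y hx0 hx1 hy0 hy1
    exact le_antisymm
      (le_rneg' hpl hwnm hsimple hy0 hy1 (rneg_lt_one' hx0))
      (le_rneg' hpl hwnm hsimple hx0 hx1 (rneg_lt_one' hy0))
  · intro x hx0 hx1
    refine ⟨rneg_lt_one' hx0, fun z hz => ?_⟩
    by_contra hne
    have hz1 : z < 1 := lt_of_le_of_ne (ResLat.le_one z) hne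
    exact absurd hz (not_lt_of_ge (le_rneg' hpl hwnm hsimple hx0 hx1 hz1))
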